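/- Let p > 1 and 0 < ω < ω_p, where ω_p = p/(p+1)². Then 1 − (p+1)²ω/p > 0, the number β = ((p/(p+1))·(1−√(1−(p+1)²ω/p)))^{1/(p−1)} is positive, F(β) = 0, and F(u) < 0 for all 0 < u < β; that is, β is the first zero of F in (0,∞). -/

import Mathlib

open Real Set Filter Topology

/-- For `p > 1` and `0 < ω < ω_p = p/(p+1)²`: `1 - (p+1)²ω/p > 0`, `β > 0`, `F(β) = 0`
and `F < 0` on `(0,β)`; that is, `β` is the first zero of `F` in `(0,∞)`. -/
theorem beta_first_zero_of_F (p ω : ℝ) (hp : 1 < p) (hω : 0 < ω) (hωp : ω < p / (p + 1) ^ 2)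
    (F : ℝ → ℝ)
    (hF : ∀ u > (0 : ℝ), F u = -ω * u ^ 2 / 2 + u ^ (p + 1) / (p + 1) - u ^ (2 * p) / (2 * p))
    (β : ℝ)
    (hβ : β = (p / (p + 1) * (1 - Real.sqrt (1 - (p + 1) ^ 2 * ω / p))) ^ (1 / (p - 1))) :
    0 < 1 - (p + 1) ^ 2 * ω / p ∧ 0 < β ∧ F β = 0 ∧
    (∀ u : ℝ, 0 < u → u < β → F u < 0) := by
  have hp0 : (0:ℝ) < p := by linarith
  have hp1 : (0:ℝ) < p + 1 := by linarith
  have hpm : (0:ℝ) < p - 1 := by linarith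
  have hDpos : 0 < 1 - (p+1)^2 * ω / p := by
    rw [sub_pos, div_lt_one hp0]
    calc (p+1)^2 * ω < (p+1)^2 * (p / (p+1)^2) :=
          mul_lt_mul_of_pos_left hωp (by positivity)
      _ = p := by field_simp
  set s := Real.sqrt (1 - (p+1)^2 * ω / p) with hs
  have hs2 : s^2 = 1 - (p+1)^2*ω/p := Real.sq_sqrt hDpos.le
  have hs0 : 0 < s := Real.sqrt_pos.2 hDpos
  have hs1 : s < 1 := by
    have : (1 - (p+1)^2*ω/p) < 1 := by
      have : 0 < (p+1)^2*ω/p := by positivity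
      linarith
    nlinarith [hs2, hs0]
  set b := p/(p+1) * (1 - s) with hb
  set c := p/(p+1) * (1 + s) with hc
  have hbpos : 0 < b := mul_pos (by positivity) (by linarith)
  have hβpos : 0 < β := by
    rw [hβ]; exact Real.rpow_pos_of_pos hbpos _
  have hne : p - 1 ≠ 0 := ne_of_gt hpm
  have hβx : β ^ (p-1) = b := by
    rw [hβ, ← Real.rpow_mul hbpos.le, one_div_mul_cancel hne, Real.rpow_one]
  have hbc : b ≤ c := by
    have h : 0 < p/(p+1) := by positivity
    nlinarith
  have hkey : s^2 * p = p - (p+1)^2*ω := by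
    have := hs2
    field_simp at this
    linarith
  have hFu : ∀ u : ℝ, 0 < u →
      F u = u^2 * (-(1/(2*p)) * ((u^(p-1) - b) * (u^(p-1) - c))) := by
    intro u hu
    rw [hF u hu]
    have h1 : u ^ (p+1) = u^2 * u^(p-1) := by
      rw [show p+1 = 2 + (p-1) by ring, Real.rpow_add hu, Real.rpow_two]
    have h2 : u ^ (2*p) = u^2 * (u^(p-1))^2 := by
      rw [show 2*p = 2 + ((p-1)+(p-1)) by ring, Real.rpow_add hu, Real.rpow_add hu,
        Real.rpow_two]
      ring
    rw [h1, h2, hb, hc]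
    have hp1' : (p+1) ≠ 0 := ne_of_gt hp1
    have hp0' : p ≠ 0 := ne_of_gt hp0
    field_simp
    linear_combination (-p) * hkey
  have hzero : F β = 0 := by
    rw [hFu β hβpos, hβx, sub_self]
    ring
  refine ⟨hDpos, hβpos, hzero, ?_⟩
  intro u hu hub
  have hy : u^(p-1) < b := by
    rw [← hβx]; exact Real.rpow_lt_rpow hu.le hub hpm
  have hyc : u^(p-1) < c := lt_of_lt_of_le hy hbc
  rw [hFu u hu]
  have hprod : 0 < (u^(p-1) - b) * (u^(p-1) - c) :=
    mul_pos_of_neg_of_neg (by linarith) (by linarith)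
  have hneg : -(1/(2*p)) * ((u^(p-1) - b) * (u^(p-1) - c)) < 0 :=
    mul_neg_of_neg_of_pos (neg_lt_zero.mpr (by positivity)) hprod
  exact mul_neg_of_pos_of_neg (by positivity) hneg
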